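/- Let 0 ≤ k ≤ n be integers. The Grassmannian Gr_k(ℝ^n), equipped with the quotient topology induced by the surjection col : V_k(n) → Gr_k(ℝ^n), is a compact Hausdorff topological space. -/

import Mathlib

open scoped BigOperators

/-- The Stiefel space `V_k(n)`: the `n×k` real matrices with linearly independent columns
(equivalently, injective linear maps `ℝ^k → ℝ^n`), an open subspace of the `n×k` matrices. -/
def Stiefel (n k : ℕ) : Set (Matrix (Fin n) (Fin k) ℝ) :=
  {A | LinearIndependent ℝ fun j : Fin k => fun i : Fin n => A i j}

/-- The column space of an `n×k` matrix. -/
def colSpan (n k : ℕ) (A : Matrix (Fin n) (Fin k) ℝ) : Submodule ℝ (Fin n → ℝ) :=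
  Submodule.span ℝ (Set.range fun j : Fin k => fun i : Fin n => A i j)

/-- The Grassmannian `Gr_k(ℝ^n)`: the set of `k`-dimensional linear subspaces of `ℝ^n`. -/
def Gr (n k : ℕ) : Type :=
  {W : Submodule ℝ (Fin n → ℝ) // Module.finrank ℝ W = k}

/-- `col`: the map sending a matrix with independent columns to its column space. -/
noncomputable def col (n k : ℕ) : Stiefel n k → Gr n k := fun A =>
  ⟨colSpan n k A.1, by
    exact (finrank_span_eq_card A.2).trans (Fintype.card_fin k)⟩

/-- The quotient topology on `Gr_k(ℝ^n)` induced by `col` from the subspace topology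
on the Stiefel space. -/
noncomputable instance grTop (n k : ℕ) : TopologicalSpace (Gr n k) :=
  TopologicalSpace.coinduced (col n k) inferInstance

namespace Stmt17

open Matrix

variable {n k : ℕ}

lemma colSpan_eq_span_range_transpose (A : Matrix (Fin n) (Fin k) ℝ) :
    colSpan n k A = Submodule.span ℝ (Set.range Aᵀ) := rfl

lemma colSpan_eq_range (A : Matrix (Fin n) (Fin k) ℝ) :
    colSpan n k A = LinearMap.range A.mulVecLin := (Matrix.range_mulVecLin A).symm

lemma mem_stiefel_iff {A : Matrix (Fin n) (Fin k) ℝ} :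
    A ∈ Stiefel n k ↔ LinearIndependent ℝ (fun j => Aᵀ j) := Iff.rfl

lemma posDef_gram {A : Matrix (Fin n) (Fin k) ℝ} (hA : A ∈ Stiefel n k) :
    (Aᵀ * A).PosDef := by
  refine Matrix.PosDef.of_dotProduct_mulVec_pos (by simpa using Matrix.isHermitian_conjTranspose_mul_self A) fun x hx => ?_
  have hinj : Function.Injective A.mulVec := Matrix.mulVec_injective_iff.mpr hA
  have hAx : A *ᵥ x ≠ 0 := fun h => hx (hinj (by simpa using h))
  have : star x ⬝ᵥ (Aᵀ * A) *ᵥ x = (A *ᵥ x) ⬝ᵥ (A *ᵥ x) := by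
    rw [star_trivial, ← Matrix.mulVec_mulVec, Matrix.dotProduct_mulVec,
      Matrix.vecMul_transpose]
  rw [this]
  simpa [Matrix.dotProduct_star_self_pos_iff] using
    (Matrix.dotProduct_star_self_pos_iff (v := A *ᵥ x)).mpr hAx

noncomputable def proj (A : Matrix (Fin n) (Fin k) ℝ) : Matrix (Fin n) (Fin n) ℝ :=
  A * (Aᵀ * A)⁻¹ * Aᵀ

lemma gram_isUnit {A : Matrix (Fin n) (Fin k) ℝ} (hA : A ∈ Stiefel n k) :
    IsUnit (Aᵀ * A) := (posDef_gram hA).isUnit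

lemma gram_inv_mul {A : Matrix (Fin n) (Fin k) ℝ} (hA : A ∈ Stiefel n k) :
    (Aᵀ * A)⁻¹ * (Aᵀ * A) = 1 :=
  Matrix.nonsing_inv_mul _ ((Matrix.isUnit_iff_isUnit_det _).mp (gram_isUnit hA))

lemma proj_mul_self {A : Matrix (Fin n) (Fin k) ℝ} (hA : A ∈ Stiefel n k) :
    proj A * A = A := by
  have : proj A * A = A * ((Aᵀ * A)⁻¹ * (Aᵀ * A)) := by
    simp [proj, Matrix.mul_assoc]
  rw [this, gram_inv_mul hA, Matrix.mul_one]

lemma proj_transpose {A : Matrix (Fin n) (Fin k) ℝ} (hA : A ∈ Stiefel n k) :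
    (proj A)ᵀ = proj A := by
  have hH : (Aᵀ * A)ᵀ = Aᵀ * A := by
    simp [Matrix.transpose_mul]
  simp [proj, Matrix.transpose_mul, Matrix.transpose_nonsing_inv, hH, Matrix.mul_assoc]

lemma proj_idem {A : Matrix (Fin n) (Fin k) ℝ} (hA : A ∈ Stiefel n k) :
    proj A * proj A = proj A := by
  have : proj A * proj A = proj A * A * ((Aᵀ * A)⁻¹ * Aᵀ) := by
    simp [proj, Matrix.mul_assoc]
  rw [this, proj_mul_self hA, proj, Matrix.mul_assoc]

lemma range_proj {A : Matrix (Fin n) (Fin k) ℝ} (hA : A ∈ Stiefel n k) :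
    LinearMap.range (proj A).mulVecLin = LinearMap.range A.mulVecLin := by
  apply le_antisymm
  · rintro _ ⟨x, rfl⟩
    refine ⟨((Aᵀ * A)⁻¹ * Aᵀ) *ᵥ x, ?_⟩
    simp only [Matrix.mulVecLin_apply, Matrix.mulVec_mulVec, proj, Matrix.mul_assoc]
  · rintro _ ⟨x, rfl⟩
    refine ⟨A.mulVec x, ?_⟩
    have := proj_mul_self hA
    simp only [Matrix.mulVecLin_apply, Matrix.mulVec_mulVec, this]

lemma ext_mulVec {m l : ℕ} {M N : Matrix (Fin m) (Fin l) ℝ}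
    (h : ∀ x, M *ᵥ x = N *ᵥ x) : M = N := by
  ext i j
  have := congrFun (h (Pi.single j 1)) i
  simpa [Matrix.mulVec_single] using this

lemma proj_unique {P Q : Matrix (Fin n) (Fin n) ℝ}
    (hPt : Pᵀ = P) (hQt : Qᵀ = Q) (hPi : P * P = P) (hQi : Q * Q = Q)
    (h : LinearMap.range P.mulVecLin = LinearMap.range Q.mulVecLin) : P = Q := by
  have fix : ∀ (R S : Matrix (Fin n) (Fin n) ℝ), R * R = R →
      LinearMap.range R.mulVecLin = LinearMap.range S.mulVecLin → R * S = S := by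
    intro R S hR hrange
    apply ext_mulVec
    intro x
    have hmem : S *ᵥ x ∈ LinearMap.range R.mulVecLin := by
      rw [hrange]; exact ⟨x, rfl⟩
    obtain ⟨y, hy⟩ := hmem
    simp only [Matrix.mulVecLin_apply] at hy
    calc (R * S) *ᵥ x = R *ᵥ (S *ᵥ x) := by rw [← Matrix.mulVec_mulVec]
    _ = R *ᵥ (R *ᵥ y) := by rw [hy]
    _ = (R * R) *ᵥ y := by rw [Matrix.mulVec_mulVec]
    _ = R *ᵥ y := by rw [hR]
    _ = S *ᵥ x := hy
  have h1 : P * Q = Q := fix P Q hPi h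
  have h2 : Q * P = P := fix Q P hQi h.symm
  calc P = Pᵀ := hPt.symm
  _ = (Q * P)ᵀ := by rw [h2]
  _ = Pᵀ * Qᵀ := by rw [Matrix.transpose_mul]
  _ = P * Q := by rw [hPt, hQt]
  _ = Q := h1

lemma proj_eq_of_colSpan_eq {A B : Matrix (Fin n) (Fin k) ℝ}
    (hA : A ∈ Stiefel n k) (hB : B ∈ Stiefel n k)
    (h : colSpan n k A = colSpan n k B) : proj A = proj B := by
  refine proj_unique (proj_transpose hA) (proj_transpose hB) (proj_idem hA) (proj_idem hB) ?_
  rw [range_proj hA, range_proj hB, ← colSpan_eq_range, ← colSpan_eq_range, h]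

lemma colSpan_eq_of_proj_eq {A B : Matrix (Fin n) (Fin k) ℝ}
    (hA : A ∈ Stiefel n k) (hB : B ∈ Stiefel n k)
    (h : proj A = proj B) : colSpan n k A = colSpan n k B := by
  rw [colSpan_eq_range, colSpan_eq_range, ← range_proj hA, ← range_proj hB, h]

end Stmt17
namespace Stmt17
open Matrix
variable {n k : ℕ}

def Kset (n k : ℕ) : Set (Matrix (Fin n) (Fin k) ℝ) := {A | Aᵀ * A = 1}

lemma Kset_subset_stiefel : Kset n k ⊆ Stiefel n k := by
  intro A hA
  rw [show (A ∈ Stiefel n k) = (Stiefel n k) A from rfl, show (Stiefel n k) A = LinearIndependent ℝ A.col from rfl,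
    ← Matrix.mulVec_injective_iff]
  intro x y hxy
  have h1 : Aᵀ * A = 1 := hA
  have h2 : Aᵀ *ᵥ (A *ᵥ x) = Aᵀ *ᵥ (A *ᵥ y) := by rw [hxy]
  simpa [Matrix.mulVec_mulVec, h1, Matrix.one_mulVec] using h2

lemma isCompact_Kset : IsCompact (Kset n k) := by
  have hclosed : IsClosed (Kset n k) := by
    have hcont : Continuous fun A : Matrix (Fin n) (Fin k) ℝ => Aᵀ * A :=
      (continuous_id.matrix_transpose).matrix_mul continuous_id
    exact isClosed_singleton.preimage hcont
  refine IsCompact.of_isClosed_subset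
    (isCompact_univ_pi fun _ : Fin n => isCompact_univ_pi fun _ : Fin k =>
      isCompact_Icc (a := (-1:ℝ)) (b := 1)) hclosed ?_
  intro A hA
  have hAA : Aᵀ * A = 1 := hA
  refine Set.mem_univ_pi.mpr fun i => ?_
  rw [Set.mem_univ_pi]
  intro j
  have hdiag : ∑ i, A i j * A i j = 1 := by
    have := congrFun (congrFun hAA j) j
    simpa [Matrix.mul_apply, Matrix.transpose_apply, Matrix.one_apply] using this
  have hle : A i j * A i j ≤ 1 := by
    rw [← hdiag]
    exact Finset.single_le_sum (fun i _ => mul_self_nonneg (A i j)) (Finset.mem_univ i)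
  exact Set.mem_Icc.mpr (abs_le.mp (abs_le_one_iff_mul_self_le_one.mpr hle))

lemma exists_frame (W : Submodule ℝ (Fin n → ℝ)) (hW : Module.finrank ℝ W = k) :
    ∃ A ∈ Kset n k, colSpan n k A = W := by
  classical
  set e := WithLp.linearEquiv 2 ℝ (Fin n → ℝ) with he
  set W' : Submodule ℝ (EuclideanSpace ℝ (Fin n)) :=
    W.map (e.symm : (Fin n → ℝ) →ₗ[ℝ] EuclideanSpace ℝ (Fin n)) with hW'def
  have hrank : Module.finrank ℝ W' = k := by
    rw [hW'def, LinearEquiv.finrank_map_eq]; exact hW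
  let b : OrthonormalBasis (Fin k) ℝ W' :=
    (stdOrthonormalBasis ℝ W').reindex (finCongr hrank)
  refine ⟨Matrix.of fun i j => e ((b j : EuclideanSpace ℝ (Fin n))) i, ?_, ?_⟩
  · show _ = (1 : Matrix (Fin k) (Fin k) ℝ)
    ext j j'
    have horth := orthonormal_iff_ite.mp b.orthonormal j j'
    have hinner : (inner ℝ (b j) (b j') : ℝ)
        = ∑ i, e ((b j : EuclideanSpace ℝ (Fin n))) i * e ((b j' : EuclideanSpace ℝ (Fin n))) i := by
      rw [Submodule.coe_inner, PiLp.inner_apply]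
      simp [RCLike.inner_apply, he, WithLp.linearEquiv_apply, mul_comm]
    rw [Matrix.mul_apply, Matrix.one_apply]
    simp only [Matrix.transpose_apply, Matrix.of_apply]
    rw [← hinner, horth]
  · show Submodule.span ℝ (Set.range fun j => fun i => e ((b j : EuclideanSpace ℝ (Fin n))) i) = W
    have hfun : (fun j : Fin k => fun i => e ((b j : EuclideanSpace ℝ (Fin n))) i)
        = (e.toLinearMap ∘ₗ W'.subtype) ∘ ⇑b.toBasis := by
      funext j
      rfl
    rw [hfun, Set.range_comp, Submodule.span_image, b.toBasis.span_eq,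
      Submodule.map_comp, Submodule.map_subtype_top, hW'def]
    exact (Submodule.map_symm_eq_iff e).mp rfl

end Stmt17
namespace Stmt17
open Matrix
variable {n k : ℕ}

lemma det_gram_ne_zero {A : Matrix (Fin n) (Fin k) ℝ} (hA : A ∈ Stiefel n k) :
    (Aᵀ * A).det ≠ 0 := (posDef_gram hA).det_pos.ne'

lemma proj_eq_smul (A : Matrix (Fin n) (Fin k) ℝ) :
    proj A = ((Aᵀ * A).det)⁻¹ • (A * (Aᵀ * A).adjugate * Aᵀ) := by
  rw [proj, Matrix.inv_def, Ring.inverse_eq_inv', Matrix.mul_smul, Matrix.smul_mul]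

lemma continuous_proj_on : Continuous fun A : Stiefel n k => proj A.1 := by
  have hc : Continuous fun A : Stiefel n k => (A.1 : Matrix (Fin n) (Fin k) ℝ) :=
    continuous_subtype_val
  have hdet : Continuous fun A : Stiefel n k => ((A.1ᵀ * A.1).det)⁻¹ :=
    ((hc.matrix_transpose.matrix_mul hc).matrix_det).inv₀ fun A => det_gram_ne_zero A.2
  have hmat : Continuous fun A : Stiefel n k =>
      A.1 * (A.1ᵀ * A.1).adjugate * A.1ᵀ :=
    (hc.matrix_mul ((hc.matrix_transpose.matrix_mul hc).matrix_adjugate)).matrix_mul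
      hc.matrix_transpose
  simp only [proj_eq_smul]
  exact hdet.smul hmat

noncomputable def rep (W : Gr n k) : Stiefel n k :=
  ⟨(exists_frame W.1 W.2).choose,
    Kset_subset_stiefel (exists_frame W.1 W.2).choose_spec.1⟩

lemma col_rep (W : Gr n k) : col n k (rep W) = W :=
  Subtype.ext (exists_frame W.1 W.2).choose_spec.2

lemma col_continuous : Continuous (col n k) := continuous_coinduced_rng

lemma col_surjective : Function.Surjective (col n k) :=
  fun W => ⟨rep W, col_rep W⟩

noncomputable def g : Gr n k → Matrix (Fin n) (Fin n) ℝ := fun W => proj (rep W).1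

lemma g_col (A : Stiefel n k) : g (col n k A) = proj A.1 := by
  apply proj_eq_of_colSpan_eq (rep (col n k A)).2 A.2
  exact congrArg Subtype.val (col_rep (col n k A))

lemma g_injective : Function.Injective (g (n := n) (k := k)) := by
  intro W1 W2 h
  have hcs : colSpan n k (rep W1).1 = colSpan n k (rep W2).1 :=
    colSpan_eq_of_proj_eq (rep W1).2 (rep W2).2 h
  have : col n k (rep W1) = col n k (rep W2) := Subtype.ext hcs
  rw [col_rep, col_rep] at this
  exact this

lemma g_continuous : Continuous (g (n := n) (k := k)) := by
  rw [show (grTop n k) = TopologicalSpace.coinduced (col n k) inferInstance from rfl] at *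
  refine continuous_coinduced_dom.mpr ?_
  have : (g ∘ col n k) = fun A : Stiefel n k => proj A.1 := funext fun A => g_col A
  rw [this]
  exact continuous_proj_on

end Stmt17

/-- `Gr_k(ℝ^n)`, with the quotient topology induced by `col`, is a compact
Hausdorff topological space. -/
theorem stmt17 (n k : ℕ) (hk : k ≤ n) :
    CompactSpace (Gr n k) ∧ T2Space (Gr n k) := by
  constructor
  · rw [← isCompact_univ_iff]
    have hK : IsCompact ((Subtype.val : Stiefel n k → Matrix (Fin n) (Fin k) ℝ) ⁻¹' Stmt17.Kset n k) := by
      rw [(Topology.IsEmbedding.subtypeVal).isCompact_iff]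
      have himg : Subtype.val '' ((Subtype.val : Stiefel n k → _) ⁻¹' Stmt17.Kset n k)
          = Stmt17.Kset n k := by
        rw [Subtype.image_preimage_coe]
        exact Set.inter_eq_right.mpr Stmt17.Kset_subset_stiefel
      rw [himg]
      exact Stmt17.isCompact_Kset
    have himg2 : col n k '' ((Subtype.val : Stiefel n k → _) ⁻¹' Stmt17.Kset n k) = Set.univ := by
      apply Set.eq_univ_of_forall
      intro W
      obtain ⟨A, hAK, hAcol⟩ := Stmt17.exists_frame W.1 W.2
      exact ⟨⟨A, Stmt17.Kset_subset_stiefel hAK⟩, hAK, Subtype.ext hAcol⟩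
    rw [← himg2]
    exact hK.image Stmt17.col_continuous
  · exact T2Space.of_injective_continuous Stmt17.g_injective Stmt17.g_continuous
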